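/- Define a positive T-diagram combinatorially as a cyclic word in arrow-endpoints and positive markings (with each arrow having two endpoints, at least one marking present). Define: an arrow has level 1 if each of its two endpoints is directly preceded (in the cyclic order) by a marking; remove all level-1 arrows and define level k inductively. Then: a positive T-diagram is admissible (every nontrivial loop that respects the circle's orientation, but may traverse arrows in either direction, meets at least one marking) if and only if every arrow has a well-defined level. -/

import Mathlib

/-- A Gauss diagram with `n` arrows: the `2n` arrow endpoints are the points of the cyclic group
`ZMod (2*n)` (listed in the cyclic order of the oriented circle), and arrow `a` points from its
underpass point `tail a` to its overpass point `head a`.  The edge `e` of the diagram is the arc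
of the circle from the point `e` to the point `e + 1`. -/
structure GaussDiagram (n : ℕ) where
  head : Fin n → ZMod (2 * n)
  tail : Fin n → ZMod (2 * n)
  inj : Function.Injective (Sum.elim head tail)

namespace GaussDiagram

variable {n : ℕ}

/-- The edge-characteristic vector of the distinguished loop of arrow `a`: it traverses the
edges from `head a` to `tail a` along the orientation of the circle (and returns along the
arrow). -/
def arcChain (G : GaussDiagram n) (a : Fin n) : ZMod (2 * n) → ℤ :=
  fun e => if (e - G.head a).val < (G.tail a - G.head a).val then 1 else 0

/-- The `(n+1) × 2n` matrix whose rows are the edge-characteristic vectors of the `n`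
distinguished loops together with the full circle (the all-ones row, indexed by `none`). -/
def loopMatrix (G : GaussDiagram n) : Matrix (Option (Fin n)) (ZMod (2 * n)) ℤ :=
  fun r e => r.elim 1 fun a => G.arcChain a e

/-- The elementary refinement move of type II+ at arrow `a`: add `+1` on the edge directly
following each endpoint of `a` and `-1` on the edge directly preceding it (with multiplicity). -/
def moveVec (G : GaussDiagram n) (a : Fin n) : ZMod (2 * n) → ℤ :=
  fun e => (if e = G.head a then 1 else 0) + (if e = G.tail a then 1 else 0)
    - (if e = G.head a - 1 then 1 else 0) - (if e = G.tail a - 1 then 1 else 0)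

/-- The edge `e` (from point `e` to point `e+1`) is adjacent to the arrow `a` if one of its two
boundary points is an endpoint of `a`. -/
def adjacent (G : GaussDiagram n) (e : ZMod (2 * n)) (a : Fin n) : Prop :=
  e = G.head a ∨ e + 1 = G.head a ∨ e = G.tail a ∨ e + 1 = G.tail a

end GaussDiagram

/-- A move of a loop in a Gauss diagram: either follow the next edge of the circle in the
direction of its orientation (`circ`), or jump along an arrow, in either direction. -/
inductive Move (n : ℕ) where
  | circ : Move n
  | jumpHT : Fin n → Move n
  | jumpTH : Fin n → Move n

/-- Whether a move is a jump along an arrow. -/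
def Move.isJump {n : ℕ} : Move n → Prop
  | .circ => False
  | _ => True

namespace GaussDiagram

/-- The point reached by performing one move starting at the point `p`. -/
def target (G : GaussDiagram n) (p : ZMod (2 * n)) : Move n → ZMod (2 * n)
  | .circ => p + 1
  | .jumpHT a => G.tail a
  | .jumpTH a => G.head a

/-- Validity of a sequence of moves starting at `p`: a jump along an arrow may only be performed
from an endpoint of that arrow. -/
def validFrom (G : GaussDiagram n) : ZMod (2 * n) → List (Move n) → Prop
  | _, [] => True
  | p, mv :: r =>
      (match mv with
        | .circ => True
        | .jumpHT a => p = G.head a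
        | .jumpTH a => p = G.tail a) ∧ validFrom G (G.target p mv) r

/-- The point reached after performing a sequence of moves from `p`. -/
def run (G : GaussDiagram n) : ZMod (2 * n) → List (Move n) → ZMod (2 * n)
  | p, [] => p
  | p, mv :: r => run G (G.target p mv) r

/-- A loop in the Gauss diagram which respects the orientation of the circle: a closed valid
sequence of moves (circle arcs are always traversed in the orientation direction, arrows may be
traversed both ways). -/
structure Loop (G : GaussDiagram n) where
  start : ZMod (2 * n)
  moves : List (Move n)
  valid : G.validFrom start moves
  closed : G.run start moves = start

/-- A loop is *reduced* (nontrivial) if it is nonempty and never backtracks: no two cyclically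
consecutive moves are jumps (two consecutive jumps necessarily cancel along the same arrow). -/
def Loop.Reduced {G : GaussDiagram n} (L : Loop G) : Prop :=
  L.moves ≠ [] ∧
  L.moves.Chain' (fun m₁ m₂ => ¬(m₁.isJump ∧ m₂.isJump)) ∧
  ∀ m₁ ∈ L.moves.getLast?, ∀ m₂ ∈ L.moves.head?, ¬(m₁.isJump ∧ m₂.isJump)

/-- Whether a sequence of moves from `p` meets a marking of the marking function `m` (which
records the number of (positive) markings on each edge). -/
def meetsFrom (G : GaussDiagram n) (m : ZMod (2 * n) → ℕ) :
    ZMod (2 * n) → List (Move n) → Prop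
  | _, [] => False
  | p, .circ :: r => 0 < m p ∨ meetsFrom G m (p + 1) r
  | _, .jumpHT a :: r => meetsFrom G m (G.tail a) r
  | _, .jumpTH a :: r => meetsFrom G m (G.head a) r

/-- A loop meets a marking if one of the circle arcs it traverses carries a marking. -/
def Loop.Meets {G : GaussDiagram n} (m : ZMod (2 * n) → ℕ) (L : Loop G) : Prop :=
  G.meetsFrom m L.start L.moves

/-- In the diagram obtained by deleting the arrows of `R`, the point `p` is directly preceded by
a marking: going backwards along the circle from `p` one finds a marking before meeting any
endpoint of a non-deleted arrow. -/
def precededBy (G : GaussDiagram n) (m : ZMod (2 * n) → ℕ) (R : Set (Fin n))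
    (p : ZMod (2 * n)) : Prop :=
  ∃ j : ℕ, 0 < m (p - 1 - (j : ZMod (2 * n))) ∧
    ∀ i < j, ∃ a ∈ R, G.head a = p - 1 - (i : ZMod (2 * n)) ∨
      G.tail a = p - 1 - (i : ZMod (2 * n))

/-- The set of arrows removed after `k` rounds of deleting the arrows of level `1` (those whose
two endpoints are both directly preceded by a marking in the current diagram). -/
def removedAt (G : GaussDiagram n) (m : ZMod (2 * n) → ℕ) : ℕ → Set (Fin n)
  | 0 => ∅
  | k + 1 => removedAt G m k ∪
      {a | G.precededBy m (removedAt G m k) (G.head a) ∧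
           G.precededBy m (removedAt G m k) (G.tail a)}

/-- An arrow has a well-defined level if it is eventually deleted in the level process. -/
def HasLevel (G : GaussDiagram n) (m : ZMod (2 * n) → ℕ) (a : Fin n) : Prop :=
  ∃ k, a ∈ G.removedAt m k

/-- The number of times a sequence of moves from `p` traverses each edge of the circle. -/
def edgeCount (G : GaussDiagram n) : ZMod (2 * n) → List (Move n) → ZMod (2 * n) → ℤ
  | _, [] => 0
  | p, .circ :: r => fun e => (if e = p then 1 else 0) + edgeCount G (p + 1) r e
  | _, .jumpHT a :: r => edgeCount G (G.tail a) r
  | _, .jumpTH a :: r => edgeCount G (G.head a) r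

/-- The net number of traversals of each arrow, counted positively in the tail-to-head
direction (the direction used by the distinguished loops). -/
def netJump {n : ℕ} : List (Move n) → Fin n → ℤ
  | [] => 0
  | .circ :: r => netJump r
  | .jumpHT a :: r => fun b => netJump r b - (if b = a then 1 else 0)
  | .jumpTH a :: r => fun b => (if b = a then 1 else 0) + netJump r b

/-- `y` is a refinement of the decorated Gauss diagram with arrow valuations `dA` and circle
valuation `d`: the sum of the markings along each distinguished loop is the corresponding
valuation, and the total sum is the valuation of the circle. -/
def IsRefinement [NeZero (2 * n)] (G : GaussDiagram n) (dA : Fin n → ℤ) (d : ℤ)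
    (y : ZMod (2 * n) → ℤ) : Prop :=
  (∀ a, ∑ e, G.arcChain a e * y e = dA a) ∧ ∑ e, y e = d

/-- The homology class in `H₁(ℝ × S¹) = ℤ` of a loop of the decorated Gauss diagram with arrow
valuations `dA` and circle valuation `d`, computed by expressing the cycle of the loop in the
basis formed by the distinguished loops and the circle. -/
def loopClass [NeZero (2 * n)] (G : GaussDiagram n) (dA : Fin n → ℤ) (d : ℤ)
    (L : Loop G) : ℤ :=
  ∑ a, netJump L.moves a * dA a +
    (G.edgeCount L.start L.moves 0 - ∑ a, netJump L.moves a * G.arcChain a 0) * d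

end GaussDiagram

namespace GaussDiagram

variable {n : ℕ} (G : GaussDiagram n)

theorem run_append (p : ZMod (2*n)) (l₁ l₂ : List (Move n)) :
    G.run p (l₁ ++ l₂) = G.run (G.run p l₁) l₂ := by
  induction l₁ generalizing p with
  | nil => rfl
  | cons x xs ih => exact ih (G.target p x)

theorem validFrom_append (p : ZMod (2*n)) (l₁ l₂ : List (Move n)) :
    G.validFrom p (l₁ ++ l₂) ↔ G.validFrom p l₁ ∧ G.validFrom (G.run p l₁) l₂ := by
  induction l₁ generalizing p with
  | nil => simp [validFrom, run]
  | cons x xs ih => simp [validFrom, run, ih, and_assoc]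

theorem meetsFrom_append (m : ZMod (2*n) → ℕ) (p : ZMod (2*n)) (l₁ l₂ : List (Move n)) :
    G.meetsFrom m p (l₁ ++ l₂) ↔ G.meetsFrom m p l₁ ∨ G.meetsFrom m (G.run p l₁) l₂ := by
  induction l₁ generalizing p with
  | nil => simp [meetsFrom, run]
  | cons x xs ih => cases x <;> simp [meetsFrom, run, target, ih, or_assoc]

theorem run_replicate (p : ZMod (2*n)) (k : ℕ) :
    G.run p (List.replicate k .circ) = p + k := by
  induction k generalizing p with
  | zero => simp [run]
  | succ k ih =>
      rw [List.replicate_succ]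
      show G.run (p + 1) _ = _
      rw [ih]; push_cast; ring

theorem validFrom_replicate (p : ZMod (2*n)) (k : ℕ) :
    G.validFrom p (List.replicate k .circ) := by
  induction k generalizing p with
  | zero => trivial
  | succ k ih => exact ⟨trivial, ih _⟩

theorem meetsFrom_replicate (m : ZMod (2*n) → ℕ) (p : ZMod (2*n)) (k : ℕ) :
    G.meetsFrom m p (List.replicate k .circ) ↔ ∃ t < k, 0 < m (p + t) := by
  induction k generalizing p with
  | zero => simp [meetsFrom]
  | succ k ih =>
      rw [List.replicate_succ]
      show (0 < m p ∨ G.meetsFrom m (p+1) _) ↔ _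
      rw [ih]
      constructor
      · rintro (h | ⟨t, ht, h⟩)
        · exact ⟨0, Nat.succ_pos _, by simpa using h⟩
        · refine ⟨t+1, by omega, ?_⟩
          have : p + 1 + (t : ZMod (2*n)) = p + ((t:ℕ)+1 : ℕ) := by push_cast; ring
          rwa [this] at h
      · rintro ⟨t, ht, h⟩
        cases t with
        | zero => left; simpa using h
        | succ t => right; refine ⟨t, by omega, ?_⟩
                    have : p + 1 + (t : ZMod (2*n)) = p + ((t:ℕ)+1 : ℕ) := by push_cast; ring
                    rwa [this]

end GaussDiagram
namespace GaussDiagram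

variable {n : ℕ} {G : GaussDiagram n}

/-- Rotating a loop by one move. -/
theorem rotate_one (m : ZMod (2*n) → ℕ) (L : Loop G) (hr : L.Reduced) (x : Move n)
    (xs : List (Move n)) (hmv : L.moves = x :: xs) :
    ∃ L' : Loop G, L'.Reduced ∧ (L'.Meets m ↔ L.Meets m) ∧
      (∀ y, y ∈ L'.moves ↔ y ∈ L.moves) ∧ L'.moves = xs ++ [x] ∧
      L'.start = G.target L.start x := by
  have hval := L.valid
  have hcl := L.closed
  rw [hmv] at hval hcl
  obtain ⟨hx, hxs⟩ : _ ∧ G.validFrom (G.target L.start x) xs := hval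
  have hrun : G.run (G.target L.start x) xs = L.start := hcl
  have hval1 : G.validFrom L.start [x] := ⟨hx, trivial⟩
  refine ⟨⟨G.target L.start x, xs ++ [x], ?_, ?_⟩, ?_, ?_, ?_, rfl, rfl⟩
  · rw [validFrom_append]
    exact ⟨hxs, by rw [hrun]; exact hval1⟩
  · rw [run_append, hrun]
    rfl
  · -- Reduced
    obtain ⟨-, hch, hcyc⟩ := hr
    rw [hmv] at hch hcyc
    refine ⟨by simp, ?_, ?_⟩
    · rw [List.Chain', List.isChain_append]
      refine ⟨List.IsChain.tail hch, List.isChain_singleton _, ?_⟩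
      intro a ha y hy
      simp only [List.head?_cons, Option.mem_def, Option.some_inj] at hy
      subst hy
      cases xs with
      | nil => simp at ha
      | cons z zs =>
        have : a ∈ (x :: z :: zs).getLast? := by
          rwa [List.getLast?_cons_cons]
        exact hcyc a this x rfl
    · intro m₁ h₁ m₂ h₂
      have hlast : (xs ++ [x]).getLast? = some x := by
        simp [List.getLast?_concat]
      rw [hlast, Option.mem_def, Option.some_inj] at h₁
      subst h₁
      cases xs with
      | nil =>
        simp only [List.nil_append, List.head?_cons, Option.mem_def, Option.some_inj] at h₂
        subst h₂
        exact hcyc x rfl x rfl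
      | cons z zs =>
        simp only [List.cons_append, List.head?_cons, Option.mem_def, Option.some_inj] at h₂
        subst h₂
        exact (List.isChain_cons_cons.mp hch).1
  · -- Meets
    unfold Loop.Meets
    simp only [hmv]
    rw [meetsFrom_append, hrun]
    cases x with
    | circ =>
      show _ ↔ (0 < m L.start ∨ G.meetsFrom m (L.start + 1) xs)
      have : G.meetsFrom m L.start [.circ] ↔ (0 < m L.start ∨ False) := Iff.rfl
      rw [this]
      show G.meetsFrom m (L.start + 1) xs ∨ _ ↔ _
      tauto
    | jumpHT a =>
      show G.meetsFrom m (G.tail a) xs ∨ G.meetsFrom m L.start [Move.jumpHT a] ↔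
        G.meetsFrom m (G.tail a) xs
      have : G.meetsFrom m L.start [Move.jumpHT a] ↔ False := Iff.rfl
      tauto
    | jumpTH a =>
      show G.meetsFrom m (G.head a) xs ∨ G.meetsFrom m L.start [Move.jumpTH a] ↔
        G.meetsFrom m (G.head a) xs
      have : G.meetsFrom m L.start [Move.jumpTH a] ↔ False := Iff.rfl
      tauto
  · intro y; rw [hmv]; simp [or_comm]

/-- Rotating a loop so that a chosen occurrence of a move comes first. -/
theorem rotate_to_front (m : ZMod (2*n) → ℕ) : ∀ (l₁ : List (Move n)) (L : Loop G)
    (mv : Move n) (l₂ : List (Move n)), L.moves = l₁ ++ mv :: l₂ → L.Reduced →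
    ∃ L' : Loop G, L'.Reduced ∧ (L'.Meets m ↔ L.Meets m) ∧
      (∀ y, y ∈ L'.moves → y ∈ L.moves) ∧ ∃ l₂', L'.moves = mv :: l₂' := by
  intro l₁
  induction l₁ with
  | nil =>
    intro L mv l₂ hmv hr
    exact ⟨L, hr, Iff.rfl, fun y hy => hy, l₂, hmv⟩
  | cons y ys ih =>
    intro L mv l₂ hmv hr
    obtain ⟨L', hr', hme', hmem', hmv', -⟩ :=
      rotate_one m L hr y (ys ++ mv :: l₂) (by simpa using hmv)
    have : L'.moves = ys ++ mv :: (l₂ ++ [y]) := by rw [hmv']; simp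
    obtain ⟨L'', hr'', hme'', hmem'', hl'⟩ := ih L' mv (l₂ ++ [y]) this hr'
    exact ⟨L'', hr'', hme''.trans hme', fun z hz => (hmem' z).mp (hmem'' z hz), hl'⟩

/-- Splitting off the trailing circle moves. -/
theorem trailing_circs (l : List (Move n)) : ∃ l' k, l = l' ++ List.replicate k .circ ∧
    (l' = [] ∨ ∃ b l'', l' = l'' ++ [b] ∧ b.isJump) := by
  induction l using List.reverseRecOn with
  | nil => exact ⟨[], 0, by simp, Or.inl rfl⟩
  | append_singleton l x ih =>
    obtain ⟨l', k, hl, hend⟩ := ih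
    cases x with
    | circ =>
      refine ⟨l', k+1, ?_, hend⟩
      rw [hl, List.replicate_succ', ← List.append_assoc]
    | jumpHT a => exact ⟨l ++ [.jumpHT a], 0, by simp, Or.inr ⟨Move.jumpHT a, l, rfl, trivial⟩⟩
    | jumpTH a => exact ⟨l ++ [.jumpTH a], 0, by simp, Or.inr ⟨Move.jumpTH a, l, rfl, trivial⟩⟩

end GaussDiagram
namespace GaussDiagram

variable {n : ℕ} {G : GaussDiagram n}

/-- Two arrows sharing an endpoint are equal. -/
theorem arrow_eq_of_shared {c b : Fin n}
    (h : (G.head c = G.head b ∨ G.head c = G.tail b) ∨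
         (G.tail c = G.head b ∨ G.tail c = G.tail b)) : c = b := by
  rcases h with (h | h) | (h | h)
  · exact Sum.inl.inj (G.inj (show Sum.elim G.head G.tail (Sum.inl c) =
      Sum.elim G.head G.tail (Sum.inl b) from h))
  · exact absurd (G.inj (show Sum.elim G.head G.tail (Sum.inl c) =
      Sum.elim G.head G.tail (Sum.inr b) from h)) (by simp)
  · exact absurd (G.inj (show Sum.elim G.head G.tail (Sum.inr c) =
      Sum.elim G.head G.tail (Sum.inl b) from h)) (by simp)
  · exact Sum.inr.inj (G.inj (show Sum.elim G.head G.tail (Sum.inr c) =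
      Sum.elim G.head G.tail (Sum.inr b) from h))

theorem head_ne_tail (a b : Fin n) : G.head a ≠ G.tail b := by
  intro h
  exact absurd (G.inj (show Sum.elim G.head G.tail (Sum.inl a) =
      Sum.elim G.head G.tail (Sum.inr b) from h)) (by simp)

/-- The final contradiction in the proof that levels imply admissibility. -/
theorem endgame (m : ZMod (2*n) → ℕ) (R U : Set (Fin n)) (hUR : ∀ b ∈ U, b ∉ R)
    (p r : ZMod (2*n)) (hp : G.precededBy m R p) (len : ℕ) (hlen : 1 ≤ len)
    (hrp : r + (len : ZMod (2*n)) = p) (hunm : ∀ t < len, ¬ 0 < m (r + (t : ℕ)))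
    (b : Fin n) (hbU : b ∈ U) (hrb : r = G.head b ∨ r = G.tail b) : False := by
  obtain ⟨j, hj, hcov⟩ := hp
  have hr : r = p - (len : ZMod (2*n)) := by rw [← hrp]; ring
  have hlej : len ≤ j := by
    by_contra hc
    push_neg at hc
    refine hunm (len - 1 - j) (by omega) ?_
    have hcast : ((len - 1 - j : ℕ) : ZMod (2*n)) = (len : ZMod (2*n)) - 1 - (j : ℕ) := by
      have h2 : len - 1 - j = len - (j+1) := by omega
      rw [h2, Nat.cast_sub (by omega)]
      push_cast; ring
    rw [hcast, hr]
    have : p - (len:ZMod (2*n)) + ((len:ZMod (2*n)) - 1 - (j:ℕ)) = p - 1 - (j:ℕ) := by ring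
    rw [this]
    exact hj
  obtain ⟨c, hcR, hc⟩ := hcov (len - 1) (by omega)
  have hpt : p - 1 - ((len - 1 : ℕ) : ZMod (2*n)) = r := by
    rw [Nat.cast_sub hlen, hr]
    push_cast; ring
  rw [hpt] at hc
  have : c = b := by
    refine arrow_eq_of_shared (G := G) ?_
    rcases hc with hc | hc <;> rcases hrb with hrb | hrb
    · exact Or.inl (Or.inl (hc.trans hrb))
    · exact Or.inl (Or.inr (hc.trans hrb))
    · exact Or.inr (Or.inl (hc.trans hrb))
    · exact Or.inr (Or.inr (hc.trans hrb))
  exact hUR b hbU (this ▸ hcR)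

theorem removedAt_zero (m : ZMod (2*n) → ℕ) : G.removedAt m 0 = ∅ := rfl

/-- Levels imply admissibility. -/
theorem meets_of_levels (m : ZMod (2*n) → ℕ) (hm : ∃ e, 0 < m e)
    (hlev : ∀ a, G.HasLevel m a) (L : Loop G) (hr : L.Reduced) : L.Meets m := by
  classical
  by_contra hM
  by_cases hjump : ∀ mv ∈ L.moves, mv = Move.circ
  · -- all-circle loop
    have hrepl : L.moves = List.replicate L.moves.length Move.circ :=
      List.eq_replicate_of_mem hjump
    have hclosed := L.closed
    rw [hrepl, run_replicate] at hclosed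
    have hdvd : 2 * n ∣ L.moves.length := by
      rw [← ZMod.natCast_eq_zero_iff]
      exact add_eq_left.mp hclosed
    have hne : L.moves.length ≠ 0 := by
      intro h
      exact hr.1 (List.length_eq_zero_iff.mp h)
    have hn : n ≠ 0 := by
      rintro rfl
      omega
    haveI : NeZero (2 * n) := ⟨by omega⟩
    have hlen2 : 2 * n ≤ L.moves.length := Nat.le_of_dvd (Nat.pos_of_ne_zero hne) hdvd
    obtain ⟨e, he⟩ := hm
    refine hM ?_
    show G.meetsFrom m L.start L.moves
    rw [hrepl, meetsFrom_replicate]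
    refine ⟨(e - L.start).val, lt_of_lt_of_le (ZMod.val_lt _) hlen2, ?_⟩
    rw [ZMod.natCast_zmod_val]
    simpa using he
  · -- there is a jump
    push_neg at hjump
    obtain ⟨mv₀, hmv₀, hmv₀c⟩ := hjump
    set U : Set (Fin n) := {a | Move.jumpHT a ∈ L.moves ∨ Move.jumpTH a ∈ L.moves} with hU
    have hUne : ∃ a, a ∈ U := by
      cases mv₀ with
      | circ => exact absurd rfl hmv₀c
      | jumpHT a => exact ⟨a, Or.inl hmv₀⟩
      | jumpTH a => exact ⟨a, Or.inr hmv₀⟩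
    obtain ⟨a₀, ha₀⟩ := hUne
    set lvl : Fin n → ℕ := fun a => Nat.find (hlev a) with hlvl
    have hex : ∃ k, ∃ a, a ∈ U ∧ lvl a = k := ⟨lvl a₀, a₀, ha₀, rfl⟩
    obtain ⟨a, haU, hak⟩ := Nat.find_spec hex
    have hmin : ∀ b ∈ U, Nat.find hex ≤ lvl b := fun b hb => Nat.find_min' hex ⟨b, hb, rfl⟩
    have haR : a ∈ G.removedAt m (lvl a) := Nat.find_spec (hlev a)
    have hk1 : 1 ≤ lvl a := by
      rcases Nat.eq_zero_or_pos (lvl a) with h | h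
      · rw [h] at haR
        exact absurd haR (by simp [removedAt])
      · exact h
    obtain ⟨k', hk'⟩ : ∃ k', lvl a = k' + 1 := ⟨lvl a - 1, by omega⟩
    have hanotR : a ∉ G.removedAt m k' := by
      intro h
      have := Nat.find_min (hlev a) (show k' < lvl a by omega)
      exact this h
    have hUnotR : ∀ b ∈ U, b ∉ G.removedAt m k' := by
      intro b hb hbR
      have h0 : lvl b ≤ k' := Nat.find_min' (hlev b) hbR
      have h1 := hmin b hb
      have h2 := hmin a haU
      omega
    have hpb : G.precededBy m (G.removedAt m k') (G.head a) ∧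
        G.precededBy m (G.removedAt m k') (G.tail a) := by
      rw [hk'] at haR
      rcases haR with h | h
      · exact absurd h hanotR
      · exact h
    have hmva : ∃ mva : Move n, mva ∈ L.moves ∧ (mva = Move.jumpHT a ∨ mva = Move.jumpTH a) := by
      rcases haU with h | h
      · exact ⟨Move.jumpHT a, h, Or.inl rfl⟩
      · exact ⟨Move.jumpTH a, h, Or.inr rfl⟩
    obtain ⟨mva, hmvaL, hmvaa⟩ := hmva
    obtain ⟨s, t, hst⟩ := List.append_of_mem hmvaL
    obtain ⟨L', hr', hme', hmem', rest, hmoves⟩ := rotate_to_front m s L mva t hst hr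
    have hM' : ¬ L'.Meets m := fun h => hM (hme'.mp h)
    have hval' := L'.valid
    have hcl' := L'.closed
    rw [hmoves] at hval' hcl'
    unfold Loop.Meets at hM'
    rw [hmoves] at hM'
    obtain ⟨rest', len, hdec, hend⟩ := trailing_circs rest
    have main : ∀ p r₀ : ZMod (2*n), G.precededBy m (G.removedAt m k') p →
        (r₀ = G.head a ∨ r₀ = G.tail a) → r₀ ≠ p →
        G.validFrom r₀ rest → G.run r₀ rest = p → ¬ G.meetsFrom m r₀ rest → False := by
      intro p r₀ hp hr₀a hr₀p hval hrun hnm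
      rw [hdec] at hval hrun hnm
      rw [run_append, run_replicate] at hrun
      rw [meetsFrom_append] at hnm
      push_neg at hnm
      obtain ⟨hnm1, hnm2'⟩ := hnm
      rw [meetsFrom_replicate] at hnm2'
      push_neg at hnm2'
      set r := G.run r₀ rest' with hrdef
      rcases hend with hrest' | ⟨x, l'', hxl, hxj⟩
      · -- rest' = [] : the previous jump is the jump along a itself
        have hrr₀ : r = r₀ := by rw [hrdef, hrest']; rfl
        have hlen1 : 1 ≤ len := by
          rcases Nat.eq_zero_or_pos len with h | h
          · exfalso
            rw [h] at hrun
            simp only [Nat.cast_zero, add_zero] at hrun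
            rw [hrr₀] at hrun
            exact hr₀p hrun
          · exact h
        exact endgame m (G.removedAt m k') U hUnotR p r hp len hlen1 hrun
          (fun t ht => by have := hnm2' t ht; omega) a haU (by rw [hrr₀]; exact hr₀a)
      · -- rest' ends with a jump x
        have hlen1 : 1 ≤ len := by
          rcases Nat.eq_zero_or_pos len with h | h
          · exfalso
            have hlast : L'.moves.getLast? = some x := by
              rw [hmoves, hdec, h, hxl]
              rw [List.replicate_zero, List.append_nil, ← List.cons_append]
              exact List.getLast?_concat
            have hhead : L'.moves.head? = some mva := by rw [hmoves]; rfl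
            refine hr'.2.2 x (by rw [hlast]; rfl) mva (by rw [hhead]; rfl) ⟨hxj, ?_⟩
            rcases hmvaa with h' | h' <;> rw [h'] <;> trivial
          · exact h
        have hbex : ∃ b : Fin n, b ∈ U ∧ (r = G.head b ∨ r = G.tail b) := by
          have hrx : r = G.run (G.run r₀ l'') [x] := by rw [hrdef, hxl, run_append]
          have hxmem : x ∈ L.moves := by
            refine hmem' x ?_
            rw [hmoves, hdec, hxl]
            simp
          cases x with
          | circ => exact absurd hxj (by simp [Move.isJump])
          | jumpHT b => exact ⟨b, Or.inl hxmem, Or.inr hrx⟩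
          | jumpTH b => exact ⟨b, Or.inr hxmem, Or.inl hrx⟩
        obtain ⟨b, hbU, hrb⟩ := hbex
        exact endgame m (G.removedAt m k') U hUnotR p r hp len hlen1 hrun
          (fun t ht => by have := hnm2' t ht; omega) b hbU hrb
    rcases hmvaa with h | h
    · rw [h] at hval' hcl' hM'
      obtain ⟨hstart, hval2⟩ := hval'
      refine main L'.start (G.tail a) (hstart ▸ hpb.1) (Or.inr rfl) ?_ hval2 hcl' hM'
      rw [hstart]
      exact fun hh => head_ne_tail a a hh.symm
    · rw [h] at hval' hcl' hM'
      obtain ⟨hstart, hval2⟩ := hval'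
      refine main L'.start (G.head a) (hstart ▸ hpb.2) (Or.inl rfl) ?_ hval2 hcl' hM'
      rw [hstart]
      exact fun hh => head_ne_tail a a hh

end GaussDiagram
namespace GaussDiagram

variable {n : ℕ} {G : GaussDiagram n}

theorem chain'_replicate_circ (k : ℕ) :
    (List.replicate k (Move.circ : Move n)).Chain'
      (fun m₁ m₂ => ¬(m₁.isJump ∧ m₂.isJump)) := by
  induction k with
  | zero => exact List.isChain_nil
  | succ k ih =>
    rw [List.replicate_succ, List.Chain', List.isChain_cons]
    exact ⟨fun y _ => by simp [Move.isJump], ih⟩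

theorem chain'_append_of_last_circ {l₁ l₂ : List (Move n)}
    (h₁ : l₁.Chain' (fun m₁ m₂ => ¬(m₁.isJump ∧ m₂.isJump)))
    (h₂ : l₂.Chain' (fun m₁ m₂ => ¬(m₁.isJump ∧ m₂.isJump)))
    (hl : ∀ x ∈ l₁.getLast?, x = Move.circ) :
    (l₁ ++ l₂).Chain' (fun m₁ m₂ => ¬(m₁.isJump ∧ m₂.isJump)) := by
  rw [List.Chain', List.isChain_append]
  refine ⟨h₁, h₂, fun x hx y _ => ?_⟩
  rw [hl x hx]
  simp [Move.isJump]

theorem getLast?_cons_replicate (mv : Move n) (k : ℕ) :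
    (mv :: List.replicate (k+1) Move.circ).getLast? = some Move.circ := by
  rw [List.replicate_succ', ← List.cons_append]
  exact List.getLast?_concat

theorem getLast?_append_replicate (l : List (Move n)) (k : ℕ) :
    ((l ++ List.replicate (k+1) Move.circ).getLast?) = some Move.circ := by
  rw [List.replicate_succ', ← List.append_assoc]
  exact List.getLast?_concat

theorem removedAt_stab (m : ZMod (2*n) → ℕ) :
    ∃ K, G.removedAt m (K+1) = G.removedAt m K := by
  by_contra h
  push_neg at h
  have hsub : ∀ K, G.removedAt m K ⊆ G.removedAt m (K+1) := by
    intro K a ha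
    exact Or.inl ha
  have hss : ∀ K, G.removedAt m K ⊂ G.removedAt m (K+1) :=
    fun K => (hsub K).ssubset_of_ne (Ne.symm (h K))
  have hcard : ∀ k, k ≤ (G.removedAt m k).ncard := by
    intro k
    induction k with
    | zero => exact Nat.zero_le _
    | succ k ih =>
      have := Set.ncard_lt_ncard (hss k) (Set.toFinite _)
      omega
  have h1 := hcard (n+1)
  have h2 : (G.removedAt m (n+1)).ncard ≤ n := by
    have := Set.ncard_le_ncard (Set.subset_univ (G.removedAt m (n+1))) (Set.toFinite _)
    simpa [Set.ncard_univ] using this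
  omega

theorem endpoint_surj (hn : n ≠ 0) (p : ZMod (2*n)) :
    ∃ c : Fin n, G.head c = p ∨ G.tail c = p := by
  haveI : NeZero (2*n) := ⟨by omega⟩
  have hcard : Fintype.card (Fin n ⊕ Fin n) = Fintype.card (ZMod (2*n)) := by
    simp [ZMod.card]
    omega
  have hbij := (Fintype.bijective_iff_injective_and_card (Sum.elim G.head G.tail)).2
    ⟨G.inj, hcard⟩
  obtain ⟨x, hx⟩ := hbij.2 p
  cases x with
  | inl c => exact ⟨c, Or.inl hx⟩
  | inr c => exact ⟨c, Or.inr hx⟩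

/-- Key step: from a point failing `precededBy`, one can reach it by a jump followed by
unmarked circle moves starting at another point failing `precededBy`. -/
theorem step_exists (m : ZMod (2*n) → ℕ) (hm : ∃ e, 0 < m e) (hn : n ≠ 0)
    (R : Set (Fin n))
    (hlive : ∀ c : Fin n, c ∉ R →
      ¬ G.precededBy m R (G.head c) ∨ ¬ G.precededBy m R (G.tail c))
    (q : ZMod (2*n)) (hq : ¬ G.precededBy m R q) :
    ∃ (p : ZMod (2*n)) (l : List (Move n)), ¬ G.precededBy m R p ∧ l ≠ [] ∧
      G.validFrom p l ∧ G.run p l = q ∧ ¬ G.meetsFrom m p l ∧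
      l.Chain' (fun m₁ m₂ => ¬(m₁.isJump ∧ m₂.isJump)) ∧
      (∀ x ∈ l.getLast?, x = Move.circ) := by
  haveI : NeZero (2*n) := ⟨by omega⟩
  obtain ⟨e, he⟩ := hm
  have hJ : ∀ q' : ZMod (2*n), ∃ t : ℕ, 0 < m (q' - 1 - (t : ZMod (2*n))) := by
    intro q'
    refine ⟨(q' - 1 - e).val, ?_⟩
    rw [ZMod.natCast_zmod_val]
    simpa using he
  suffices key : ∀ (N : ℕ) (q' : ZMod (2*n)), Nat.find (hJ q') < N →
      ¬ G.precededBy m R q' →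
      ∃ (p : ZMod (2*n)) (l : List (Move n)), ¬ G.precededBy m R p ∧ l ≠ [] ∧
        G.validFrom p l ∧ G.run p l = q' ∧ ¬ G.meetsFrom m p l ∧
        l.Chain' (fun m₁ m₂ => ¬(m₁.isJump ∧ m₂.isJump)) ∧
        (∀ x ∈ l.getLast?, x = Move.circ) by
    exact key (Nat.find (hJ q) + 1) q (Nat.lt_succ_self _) hq
  intro N
  induction N with
  | zero => intro q' h; omega
  | succ N ih =>
    intro q' hqN hq'
    set j₁ := Nat.find (hJ q') with hj₁def
    have hj₁ : 0 < m (q' - 1 - (j₁ : ZMod (2*n))) := Nat.find_spec (hJ q')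
    have hmin : ∀ t < j₁, ¬ 0 < m (q' - 1 - (t : ZMod (2*n))) :=
      fun t ht => Nat.find_min (hJ q') ht
    unfold precededBy at hq'
    push_neg at hq'
    obtain ⟨i, hij, hcov⟩ := hq' j₁ hj₁
    set x := q' - 1 - (i : ZMod (2*n)) with hxdef
    obtain ⟨c, hc⟩ := endpoint_surj (G := G) hn x
    have hcR : c ∉ R := by
      intro h
      have := hcov c h
      tauto
    -- circle run from x to q' is unmarked
    have hxq : x + ((i+1 : ℕ) : ZMod (2*n)) = q' := by
      rw [hxdef]; push_cast; ring
    have hunm : ¬ G.meetsFrom m x (List.replicate (i+1) Move.circ) := by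
      rw [meetsFrom_replicate]
      rintro ⟨t, ht, hmt⟩
      refine hmin (i - t) (by omega) ?_
      have : q' - 1 - ((i - t : ℕ) : ZMod (2*n)) = x + (t : ℕ) := by
        rw [hxdef, Nat.cast_sub (by omega : t ≤ i)]
        ring
      rw [this]
      exact hmt
    rcases hlive c hcR with hF | hF
    · -- head c fails precededBy
      rcases hc with hc | hc
      · -- x = head c : recurse at x
        rw [hc] at hF
        have hlt : Nat.find (hJ x) < N := by
          have hle : Nat.find (hJ x) ≤ j₁ - i - 1 := by
            refine Nat.find_le ?_
            have : x - 1 - ((j₁ - i - 1 : ℕ) : ZMod (2*n)) =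
                q' - 1 - (j₁ : ZMod (2*n)) := by
              rw [hxdef, Nat.cast_sub (by omega : 1 ≤ j₁ - i), Nat.cast_sub (by omega : i ≤ j₁)]
              push_cast; ring
            rw [this]
            exact hj₁
          omega
        obtain ⟨p, l, hp, hlne, hval, hrun, hmeets, hch, hlast⟩ := ih x hlt hF
        refine ⟨p, l ++ List.replicate (i+1) Move.circ, hp, by simp, ?_, ?_, ?_, ?_, ?_⟩
        · rw [validFrom_append]
          exact ⟨hval, validFrom_replicate G _ _⟩
        · rw [run_append, run_replicate, hrun]
          exact hxq
        · rw [meetsFrom_append, hrun]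
          tauto
        · exact chain'_append_of_last_circ hch (chain'_replicate_circ _) hlast
        · rw [getLast?_append_replicate]
          rintro y ⟨rfl⟩
          rfl
      · -- x = tail c : jump from head c
        refine ⟨G.head c, Move.jumpHT c :: List.replicate (i+1) Move.circ, hF,
          by simp, ⟨rfl, ?_⟩, ?_, ?_, ?_, ?_⟩
        · show G.validFrom (G.tail c) _
          rw [hc]
          exact validFrom_replicate G _ _
        · show G.run (G.tail c) _ = q'
          rw [hc, run_replicate]
          exact hxq
        · show ¬ G.meetsFrom m (G.tail c) _
          rw [hc]
          exact hunm
        · rw [List.replicate_succ, List.Chain', List.isChain_cons]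
          refine ⟨fun y hy => ?_, by rw [← List.replicate_succ]; exact chain'_replicate_circ _⟩
          simp only [List.head?_cons, Option.mem_def, Option.some_inj] at hy
          subst hy
          simp [Move.isJump]
        · rw [getLast?_cons_replicate]
          rintro y ⟨rfl⟩
          rfl
    · -- tail c fails precededBy
      rcases hc with hc | hc
      · -- x = head c : jump from tail c
        refine ⟨G.tail c, Move.jumpTH c :: List.replicate (i+1) Move.circ, hF,
          by simp, ⟨rfl, ?_⟩, ?_, ?_, ?_, ?_⟩
        · show G.validFrom (G.head c) _
          rw [hc]
          exact validFrom_replicate G _ _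
        · show G.run (G.head c) _ = q'
          rw [hc, run_replicate]
          exact hxq
        · show ¬ G.meetsFrom m (G.head c) _
          rw [hc]
          exact hunm
        · rw [List.replicate_succ, List.Chain', List.isChain_cons]
          refine ⟨fun y hy => ?_, by rw [← List.replicate_succ]; exact chain'_replicate_circ _⟩
          simp only [List.head?_cons, Option.mem_def, Option.some_inj] at hy
          subst hy
          simp [Move.isJump]
        · rw [getLast?_cons_replicate]
          rintro y ⟨rfl⟩
          rfl
      · -- x = tail c : recurse at x
        rw [hc] at hF
        have hlt : Nat.find (hJ x) < N := by
          have hle : Nat.find (hJ x) ≤ j₁ - i - 1 := by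
            refine Nat.find_le ?_
            have : x - 1 - ((j₁ - i - 1 : ℕ) : ZMod (2*n)) =
                q' - 1 - (j₁ : ZMod (2*n)) := by
              rw [hxdef, Nat.cast_sub (by omega : 1 ≤ j₁ - i), Nat.cast_sub (by omega : i ≤ j₁)]
              push_cast; ring
            rw [this]
            exact hj₁
          omega
        obtain ⟨p, l, hp, hlne, hval, hrun, hmeets, hch, hlast⟩ := ih x hlt hF
        refine ⟨p, l ++ List.replicate (i+1) Move.circ, hp, by simp, ?_, ?_, ?_, ?_, ?_⟩
        · rw [validFrom_append]
          exact ⟨hval, validFrom_replicate G _ _⟩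
        · rw [run_append, run_replicate, hrun]
          exact hxq
        · rw [meetsFrom_append, hrun]
          tauto
        · exact chain'_append_of_last_circ hch (chain'_replicate_circ _) hlast
        · rw [getLast?_append_replicate]
          rintro y ⟨rfl⟩
          rfl

end GaussDiagram
namespace GaussDiagram

variable {n : ℕ} {G : GaussDiagram n}

theorem exists_bad_loop (m : ZMod (2*n) → ℕ) (hm : ∃ e, 0 < m e) (a : Fin n)
    (hna : ¬ G.HasLevel m a) : ∃ L : Loop G, L.Reduced ∧ ¬ L.Meets m := by
  classical
  have hn : n ≠ 0 := by rintro rfl; exact a.elim0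
  haveI : NeZero (2*n) := ⟨by omega⟩
  obtain ⟨K, hK⟩ := removedAt_stab (G := G) m
  set R := G.removedAt m K with hR
  have hlive : ∀ c : Fin n, c ∉ R →
      ¬ G.precededBy m R (G.head c) ∨ ¬ G.precededBy m R (G.tail c) := by
    intro c hc
    rw [← not_and_or]
    intro hand
    have hmem : c ∈ G.removedAt m (K+1) := Or.inr hand
    rw [hK] at hmem
    exact hc hmem
  have hq₀ : ∃ q : ZMod (2*n), ¬ G.precededBy m R q := by
    have haR : a ∉ R := fun h => hna ⟨K, h⟩
    rcases hlive a haR with h | h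
    exacts [⟨_, h⟩, ⟨_, h⟩]
  obtain ⟨q₀, hq₀⟩ := hq₀
  have hstep : ∀ q : {q : ZMod (2*n) // ¬ G.precededBy m R q},
      ∃ p : {q : ZMod (2*n) // ¬ G.precededBy m R q}, ∃ l : List (Move n), l ≠ [] ∧
        G.validFrom p.1 l ∧ G.run p.1 l = q.1 ∧ ¬ G.meetsFrom m p.1 l ∧
        l.Chain' (fun m₁ m₂ => ¬(m₁.isJump ∧ m₂.isJump)) ∧
        (∀ x ∈ l.getLast?, x = Move.circ) := by
    rintro ⟨q, hq⟩
    obtain ⟨p, l, hp, h⟩ := step_exists m hm hn R hlive q hq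
    exact ⟨⟨p, hp⟩, l, h⟩
  choose f l hlne hval hrun hmeets hch hlast using hstep
  set seq : ℕ → {q : ZMod (2*n) // ¬ G.precededBy m R q} := fun s => f^[s] ⟨q₀, hq₀⟩
    with hseq
  have hseqS : ∀ s, seq (s+1) = f (seq s) := by
    intro s
    rw [hseq]
    exact Function.iterate_succ_apply' f s _
  have big : ∀ (d s : ℕ), ∃ lb : List (Move n),
      G.validFrom (seq (s+d)).1 lb ∧ G.run (seq (s+d)).1 lb = (seq s).1 ∧
      ¬ G.meetsFrom m (seq (s+d)).1 lb ∧
      lb.Chain' (fun m₁ m₂ => ¬(m₁.isJump ∧ m₂.isJump)) ∧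
      (∀ x ∈ lb.getLast?, x = Move.circ) ∧ (lb = [] ↔ d = 0) := by
    intro d
    induction d with
    | zero =>
      intro s
      exact ⟨[], trivial, rfl, not_false, List.isChain_nil, by simp, by simp⟩
    | succ d ih =>
      intro s
      obtain ⟨lb, hvalb, hrunb, hmb, hchb, hlb, hnilb⟩ := ih s
      have h1 : seq (s + (d+1)) = f (seq (s+d)) := hseqS (s+d)
      refine ⟨l (seq (s+d)) ++ lb, ?_, ?_, ?_, ?_, ?_, ?_⟩
      · rw [h1, validFrom_append, hrun]
        exact ⟨hval _, hvalb⟩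
      · rw [h1, run_append, hrun]
        exact hrunb
      · rw [h1, meetsFrom_append, hrun]
        rintro (h | h)
        · exact hmeets _ h
        · exact hmb h
      · exact chain'_append_of_last_circ (hch _) hchb (hlast _)
      · rcases eq_or_ne lb [] with hlbe | hlbe
        · rw [hlbe, List.append_nil]
          exact hlast _
        · rw [List.getLast?_append_of_ne_nil _ hlbe]
          exact hlb
      · simp [hlne]
  obtain ⟨s, t, hst, hseq_eq⟩ := Finite.exists_ne_map_eq_of_infinite seq
  have hex : ∃ u v, u < v ∧ seq u = seq v := by
    rcases lt_or_gt_of_ne hst with h | h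
    exacts [⟨s, t, h, hseq_eq⟩, ⟨t, s, h, hseq_eq.symm⟩]
  obtain ⟨u, v, huv, heq⟩ := hex
  obtain ⟨lb, hvalb, hrunb, hmb, hchb, hlb, hnilb⟩ := big (v - u) u
  have hvu : u + (v - u) = v := by omega
  rw [hvu] at hvalb hrunb hmb
  refine ⟨⟨(seq v).1, lb, hvalb, ?_⟩, ⟨?_, hchb, ?_⟩, ?_⟩
  · rw [hrunb, heq]
  · intro h
    rw [hnilb] at h
    omega
  · intro m₁ h₁ m₂ _
    rw [hlb m₁ h₁]
    simp [Move.isJump]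
  · exact hmb

end GaussDiagram
/-- A positive T-diagram (all markings positive, at least one marking) is admissible — every
nontrivial orientation-respecting loop meets at least one marking — if and only if every arrow
has a well-defined level. -/
theorem stmt10 (n : ℕ) (G : GaussDiagram n) (m : ZMod (2 * n) → ℕ) (hm : ∃ e, 0 < m e) :
    (∀ L : GaussDiagram.Loop G, L.Reduced → L.Meets m) ↔ ∀ a, G.HasLevel m a := by
  constructor
  · intro hadm a
    by_contra hna
    obtain ⟨L, hred, hnm⟩ := GaussDiagram.exists_bad_loop m hm a hna
    exact hnm (hadm L hred)
  · intro hlev L hred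
    exact GaussDiagram.meets_of_levels m hm hlev L hred
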